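/- arXiv:1112.3390 — 3 statements merged into one kernel-verified Lean document; each statement's English description precedes it below -/
import Mathlib

section
/- Let m = ℓ₁⋯ℓₛ be a product of s distinct odd primes and let a be an integer with gcd(a,m)=1. Then the absolute value of the sum over t from 0 to m-1 of the Jacobi symbol ((t² - a)/m) equals 1. -/
open Finset

private lemma sum_quadChar_sq_sub {F : Type*} [Field F] [Fintype F] [DecidableEq F]
    (hF : ringChar F ≠ 2) {a : F} (ha : a ≠ 0) :
    ∑ x : F, quadraticChar F (x ^ 2 - a) = -1 := by
  set χ := quadraticChar F with hχ
  have step1 : ∑ x : F, χ (x ^ 2 - a) = ∑ y : F, (χ y + 1) * χ (y - a) := by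
    rw [← Finset.sum_fiberwise univ (fun x : F => x ^ 2) (fun x => χ (x ^ 2 - a))]
    refine Finset.sum_congr rfl fun y _ => ?_
    have : ∑ x ∈ univ.filter (fun x : F => x ^ 2 = y), χ (x ^ 2 - a)
        = ∑ x ∈ univ.filter (fun x : F => x ^ 2 = y), χ (y - a) := by
      refine Finset.sum_congr rfl fun x hx => ?_
      rw [(Finset.mem_filter.mp hx).2]
    rw [this, Finset.sum_const, nsmul_eq_mul]
    congr 1
    have hcard := quadraticChar_card_sqrts hF y
    have hset : {x : F | x ^ 2 = y}.toFinset = univ.filter (fun x : F => x ^ 2 = y) := by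
      ext x; simp
    rw [hset] at hcard
    rw [← hcard]
  have step2 : ∑ y : F, χ (y - a) = 0 := by
    rw [← quadraticChar_sum_zero hF]
    exact Fintype.sum_equiv (Equiv.subRight a) _ _ fun y => rfl
  have step3 : ∑ y : F, χ y * χ (y - a) = -1 := by
    have hzero : χ 0 * χ (0 - a) = 0 := by rw [hχ, quadraticChar_zero, zero_mul]
    rw [← Finset.sum_subset (Finset.subset_univ (univ \ {0}))
      (by
        intro x _ hx
        simp only [mem_sdiff, mem_univ, true_and, mem_singleton, not_not] at hx
        rw [hx]; exact hzero)]
    have congr1 : ∑ y ∈ univ \ {0}, χ y * χ (y - a)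
        = ∑ y ∈ univ \ {0}, χ (1 - a * y⁻¹) := by
      refine Finset.sum_congr rfl fun y hy => ?_
      have hy0 : y ≠ 0 := by simpa using (Finset.mem_sdiff.mp hy).2
      have heq : y * (y - a) = (y * y) * (1 - a * y⁻¹) := by field_simp
      have h1 : χ (y * y) = 1 :=
        (quadraticChar_one_iff_isSquare (mul_ne_zero hy0 hy0)).mpr ⟨y, rfl⟩
      rw [← map_mul, heq, map_mul, h1, one_mul]
    rw [congr1]
    have congr2 : ∑ y ∈ univ \ {0}, χ (1 - a * y⁻¹) = ∑ z ∈ univ \ {1}, χ z := by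
      refine Finset.sum_nbij' (fun y => 1 - a * y⁻¹) (fun z => a * (1 - z)⁻¹) ?_ ?_ ?_ ?_ ?_
      · intro y hy
        have hy0 : y ≠ 0 := by simpa using (Finset.mem_sdiff.mp hy).2
        simp only [mem_sdiff, mem_univ, true_and, mem_singleton]
        intro h
        have h0 : a * y⁻¹ = 0 := by linear_combination -h
        rcases mul_eq_zero.mp h0 with h' | h'
        · exact ha h'
        · exact inv_ne_zero hy0 h'
      · intro z hz
        have hz1 : z ≠ 1 := by simpa using (Finset.mem_sdiff.mp hz).2
        simp only [mem_sdiff, mem_univ, true_and, mem_singleton]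
        exact mul_ne_zero ha (inv_ne_zero (sub_ne_zero.mpr (Ne.symm hz1)))
      · intro y hy
        have hy0 : y ≠ 0 := by simpa using (Finset.mem_sdiff.mp hy).2
        field_simp
        rw [sub_sub_cancel, div_self ha]
      · intro z hz
        have hz1 : z ≠ 1 := by simpa using (Finset.mem_sdiff.mp hz).2
        have h1z : (1 : F) - z ≠ 0 := sub_ne_zero.mpr (Ne.symm hz1)
        field_simp
        ring
      · intro y _
        rfl
    rw [congr2]
    have : ∑ z ∈ univ \ {1}, χ z = (∑ z : F, χ z) - χ 1 := by
      rw [eq_sub_iff_add_eq, Finset.sum_sdiff_eq_sub (Finset.subset_univ _),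
        Finset.sum_singleton]
      ring
    rw [this, quadraticChar_sum_zero hF, map_one]
    ring
  calc ∑ x : F, χ (x ^ 2 - a) = ∑ y : F, (χ y + 1) * χ (y - a) := step1
    _ = ∑ y : F, χ y * χ (y - a) + ∑ y : F, χ (y - a) := by
        rw [← Finset.sum_add_distrib]; refine Finset.sum_congr rfl fun y _ => by ring
    _ = -1 := by rw [step2, step3, add_zero]

private lemma sum_range_eq_sum_zmod {M : Type*} [AddCommMonoid M] (n : ℕ) [NeZero n]
    (f : ZMod n → M) : ∑ t ∈ Finset.range n, f (t : ZMod n) = ∑ x : ZMod n, f x := by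
  refine Finset.sum_nbij' (fun t => (t : ZMod n)) (fun x => x.val) ?_ ?_ ?_ ?_ ?_
  · intro t _; exact Finset.mem_univ _
  · intro x _; exact Finset.mem_range.mpr x.val_lt
  · intro t ht; exact ZMod.val_natCast_of_lt (Finset.mem_range.mp ht)
  · intro x _; exact ZMod.natCast_rightInverse x
  · intro t _; rfl

private lemma prime_sum (p : ℕ) (hp : p.Prime) (hp2 : p ≠ 2) (a : ℤ)
    (ha : (a : ZMod p) ≠ 0) :
    ∑ t ∈ Finset.range p, jacobiSym ((t : ℤ) ^ 2 - a) p = -1 := by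
  haveI : Fact p.Prime := ⟨hp⟩
  have hchar : ringChar (ZMod p) ≠ 2 := by
    rw [ZMod.ringChar_zmod_n]; exact hp2
  have key := sum_quadChar_sq_sub hchar ha
  have : ∀ t ∈ Finset.range p, jacobiSym ((t : ℤ) ^ 2 - a) p
      = quadraticChar (ZMod p) (((t : ℕ) : ZMod p) ^ 2 - (a : ZMod p)) := by
    intro t _
    rw [← jacobiSym.legendreSym.to_jacobiSym]
    unfold legendreSym
    congr 1
    push_cast
    ring
  rw [Finset.sum_congr rfl this]
  rw [sum_range_eq_sum_zmod p (fun x : ZMod p => quadraticChar (ZMod p) (x ^ 2 - (a : ZMod p)))]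
  exact key

private lemma crt_fst {m n : ℕ} [NeZero m] [NeZero n] (h : Nat.Coprime m n)
    (x : ZMod (m * n)) :
    (ZMod.chineseRemainder h x).1 = (x.val : ZMod m) ∧
    (ZMod.chineseRemainder h x).2 = (x.val : ZMod n) := by
  haveI : NeZero (m * n) := ⟨mul_ne_zero (NeZero.ne m) (NeZero.ne n)⟩
  have hx : (ZMod.chineseRemainder h) x
      = ZMod.castHom (show Nat.lcm m n ∣ m * n by simp [Nat.lcm_dvd_iff]) (ZMod m × ZMod n) x :=
    rfl
  rw [hx, ZMod.castHom_apply, ← ZMod.natCast_val]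
  constructor <;> simp

private lemma jacobi_sum_mul {m n : ℕ} [NeZero m] [NeZero n] (h : Nat.Coprime m n) (a : ℤ) :
    ∑ x : ZMod (m * n), jacobiSym ((x.val : ℤ) ^ 2 - a) (m * n)
      = (∑ u : ZMod m, jacobiSym ((u.val : ℤ) ^ 2 - a) m)
        * (∑ v : ZMod n, jacobiSym ((v.val : ℤ) ^ 2 - a) n) := by
  haveI : NeZero (m * n) := ⟨mul_ne_zero (NeZero.ne m) (NeZero.ne n)⟩
  have hmod : ∀ (k : ℕ), k ≠ 0 → ∀ (y : ZMod k), ∀ (t : ℕ), (t : ZMod k) = y →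
      jacobiSym ((t : ℤ) ^ 2 - a) k = jacobiSym ((y.val : ℤ) ^ 2 - a) k := by
    intro k hk y t hty
    haveI : NeZero k := ⟨hk⟩
    refine jacobiSym.mod_left' ?_
    have : ((t : ℤ) : ZMod k) = ((y.val : ℤ) : ZMod k) := by
      push_cast
      rw [hty, ZMod.natCast_val, ZMod.cast_id]
    have hcong : (t : ℤ) ≡ (y.val : ℤ) [ZMOD k] := (ZMod.intCast_eq_intCast_iff' _ _ _).mp this
    exact (hcong.pow 2).sub_right a
  calc ∑ x : ZMod (m * n), jacobiSym ((x.val : ℤ) ^ 2 - a) (m * n)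
      = ∑ x : ZMod (m * n),
          jacobiSym (((ZMod.chineseRemainder h x).1.val : ℤ) ^ 2 - a) m
          * jacobiSym (((ZMod.chineseRemainder h x).2.val : ℤ) ^ 2 - a) n := by
        refine Finset.sum_congr rfl fun x _ => ?_
        rw [jacobiSym.mul_right]
        obtain ⟨h1, h2⟩ := crt_fst h x
        congr 1
        · rw [h1]; exact hmod m (NeZero.ne m) _ x.val rfl
        · rw [h2]; exact hmod n (NeZero.ne n) _ x.val rfl
    _ = ∑ p : ZMod m × ZMod n,
          jacobiSym ((p.1.val : ℤ) ^ 2 - a) m * jacobiSym ((p.2.val : ℤ) ^ 2 - a) n := by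
        exact Fintype.sum_bijective (ZMod.chineseRemainder h)
          (ZMod.chineseRemainder h).toEquiv.bijective _ _ fun x => rfl
    _ = _ := by
        rw [Finset.sum_mul_sum, Fintype.sum_prod_type]

private lemma key_sum (s : Finset ℕ) (hs : ∀ ℓ ∈ s, ℓ.Prime ∧ ℓ ≠ 2) (a : ℤ)
    (ha : Int.gcd a ((∏ ℓ ∈ s, ℓ : ℕ) : ℤ) = 1) :
    ∑ t ∈ Finset.range (∏ ℓ ∈ s, ℓ), jacobiSym ((t : ℤ) ^ 2 - a) (∏ ℓ ∈ s, ℓ)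
      = (-1) ^ s.card := by
  classical
  induction s using Finset.induction_on with
  | empty => simp [jacobiSym.one_right]
  | insert ℓ s' hnot ih =>
    rw [Finset.prod_insert hnot] at ha ⊢
    rw [Finset.card_insert_of_notMem hnot]
    obtain ⟨hℓp, hℓ2⟩ := hs ℓ (Finset.mem_insert_self _ _)
    have hs' : ∀ ℓ' ∈ s', ℓ'.Prime ∧ ℓ' ≠ 2 := fun ℓ' h' =>
      hs ℓ' (Finset.mem_insert_of_mem h')
    set n := ∏ ℓ' ∈ s', ℓ' with hn
    haveI : NeZero ℓ := ⟨hℓp.ne_zero⟩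
    haveI : NeZero n := ⟨Finset.prod_ne_zero_iff.mpr fun ℓ' h' => (hs' ℓ' h').1.ne_zero⟩
    have hcop : Nat.Coprime ℓ n := by
      refine Nat.Coprime.prod_right fun ℓ' h' => ?_
      exact (Nat.coprime_primes hℓp (hs' ℓ' h').1).mpr (fun he => hnot (he ▸ h'))
    have hcop_a : Nat.Coprime a.natAbs (ℓ * n) := by
      have := ha
      rw [Int.gcd] at this
      simpa [Nat.Coprime, Int.natAbs_mul] using this
    have hgcd_split : Int.gcd a ℓ = 1 ∧ Int.gcd a ((n : ℕ) : ℤ) = 1 := by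
      constructor
      · have := Nat.Coprime.coprime_dvd_right (dvd_mul_right ℓ n) hcop_a
        simpa [Int.gcd] using this
      · have := Nat.Coprime.coprime_dvd_right (dvd_mul_left n ℓ) hcop_a
        simpa [Int.gcd] using this
    -- convert range sums to zmod sums
    have hconv : ∀ (k : ℕ) [NeZero k],
        ∑ t ∈ Finset.range k, jacobiSym ((t : ℤ) ^ 2 - a) k
          = ∑ x : ZMod k, jacobiSym ((x.val : ℤ) ^ 2 - a) k := by
      intro k _
      rw [← sum_range_eq_sum_zmod k (fun x : ZMod k => jacobiSym ((x.val : ℤ) ^ 2 - a) k)]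
      refine Finset.sum_congr rfl fun t ht => ?_
      rw [ZMod.val_natCast_of_lt (Finset.mem_range.mp ht)]
    have hprime : ∑ t ∈ Finset.range ℓ, jacobiSym ((t : ℤ) ^ 2 - a) ℓ = -1 := by
      refine prime_sum ℓ hℓp hℓ2 a ?_
      rw [Ne, ZMod.intCast_zmod_eq_zero_iff_dvd]
      intro hdvd
      have : (ℓ : ℤ) ∣ Int.gcd a ℓ := Int.dvd_coe_gcd hdvd dvd_rfl
      rw [hgcd_split.1] at this
      exact absurd (Int.le_of_dvd one_pos this) (by exact_mod_cast hℓp.one_lt.not_ge)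
    rw [hconv (ℓ * n), jacobi_sum_mul hcop a, ← hconv ℓ, ← hconv n, hprime,
      ih hs' hgcd_split.2, pow_succ]
    ring

theorem abs_sum_jacobi_quadratic_complete (s : Finset ℕ)
    (hs : ∀ ℓ ∈ s, ℓ.Prime ∧ ℓ ≠ 2) (m : ℕ) (hm : m = ∏ ℓ ∈ s, ℓ)
    (a : ℤ) (ha : Int.gcd a m = 1) :
    |∑ t ∈ Finset.range m, jacobiSym ((t : ℤ) ^ 2 - a) m| = 1 := by
  subst hm
  rw [key_sum s hs a ha]
  simp [abs_pow]
end

section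
/- Fix an integer ν ≥ 1. For L ≥ 3, T ≥ 1 and any integer a, ∑_{|t| < T} ω_L(t² - a)^ν ≪ T/log L + L^ν/(log L)^ν, where the implied constant depends only on ν. -/
set_option maxHeartbeats 2000000

open Finset

/-- The primes in the interval `[L, 2L]`. -/
noncomputable def primesIn (L : ℝ) : Finset ℕ := (Finset.Icc ⌈L⌉₊ ⌊2 * L⌋₊).filter Nat.Prime

/-- `omegaL L n` is the number of primes in `[L, 2L]` dividing `n`. -/
noncomputable def omegaL (L : ℝ) (n : ℤ) : ℕ := ((primesIn L).filter (fun ℓ : ℕ => ((ℓ : ℤ) ∣ n))).card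

lemma natCard_sq_roots_prime (p : ℕ) (hp : p.Prime) (a : ZMod p) :
    Nat.card {x : ZMod p // x ^ 2 = a} ≤ 2 := by
  haveI : Fact p.Prime := ⟨hp⟩
  have : Nat.card {x : ZMod p // x ^ 2 = a} = Set.ncard {x : ZMod p | x ^ 2 = a} :=
    Nat.card_coe_set_eq _
  rw [this]
  by_cases h : ∃ r : ZMod p, r ^ 2 = a
  · obtain ⟨r, hr⟩ := h
    have hsub : {x : ZMod p | x ^ 2 = a} ⊆ {r, -r} := by
      intro x hx
      have hx' : x ^ 2 = a := hx
      have : (x - r) * (x + r) = 0 := by linear_combination hx' - hr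
      rcases mul_eq_zero.1 this with h1 | h1
      · left; exact sub_eq_zero.1 h1
      · right; exact eq_neg_of_add_eq_zero_left h1
    calc Set.ncard {x : ZMod p | x ^ 2 = a} ≤ Set.ncard ({r, -r} : Set (ZMod p)) :=
          Set.ncard_le_ncard hsub (Set.toFinite _)
      _ ≤ 2 := by
          calc Set.ncard (insert r ({-r} : Set (ZMod p))) ≤ Set.ncard ({-r} : Set (ZMod p)) + 1 :=
                Set.ncard_insert_le _ _
            _ ≤ 2 := by rw [Set.ncard_singleton]
  · have : {x : ZMod p | x ^ 2 = a} = ∅ := by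
      ext x; simp only [Set.mem_setOf_eq, Set.mem_empty_iff_false, iff_false]
      exact fun hx => h ⟨x, hx⟩
    simp [this]

lemma natCard_sq_roots_prod (a : ℤ) : ∀ (S : Finset ℕ), (∀ p ∈ S, p.Prime) →
    Nat.card {x : ZMod (∏ p ∈ S, p) // x ^ 2 = (a : ZMod (∏ p ∈ S, p))} ≤ 2 ^ S.card := by
  classical
  intro S
  induction S using Finset.induction_on with
  | empty =>
    intro _
    simp only [Finset.prod_empty, Finset.card_empty, pow_zero]
    have := Finite.card_subtype_le (fun x : ZMod 1 => x ^ 2 = (a : ZMod 1))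
    exact this.trans (le_of_eq (by rw [Nat.card_eq_fintype_card, ZMod.card]))
  | @insert p s hpns ih =>
    intro hS
    have hp : p.Prime := hS p (Finset.mem_insert_self _ _)
    have hs : ∀ q ∈ s, q.Prime := fun q hq => hS q (Finset.mem_insert_of_mem hq)
    have hcop : Nat.Coprime p (∏ q ∈ s, q) := by
      refine Nat.Coprime.prod_right fun q hq => ?_
      exact (Nat.coprime_primes hp (hs q hq)).mpr (fun h => hpns (h ▸ hq))
    rw [Finset.prod_insert hpns, Finset.card_insert_of_notMem hpns]
    set m := ∏ q ∈ s, q with hm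
    have e := ZMod.chineseRemainder hcop
    have key : Nat.card {x : ZMod (p * m) // x ^ 2 = (a : ZMod (p * m))}
        = Nat.card {y : ZMod p × ZMod m // y ^ 2 = ((a : ZMod p), (a : ZMod m))} := by
      refine Nat.card_congr (e.toEquiv.subtypeEquiv fun x => ?_)
      show x ^ 2 = ((a : ℤ) : ZMod (p * m)) ↔ e x ^ 2 = ((a : ZMod p), (a : ZMod m))
      have hcast : e ((a : ℤ) : ZMod (p * m)) = ((a : ZMod p), (a : ZMod m)) := by
        rw [map_intCast]
        ext <;> simp
      constructor
      · intro hx; rw [← map_pow, hx, hcast]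
      · intro hx
        have : e (x ^ 2) = e ((a : ℤ) : ZMod (p * m)) := by rw [map_pow, hx, hcast]
        exact e.injective this
    rw [key]
    have key2 : Nat.card {y : ZMod p × ZMod m // y ^ 2 = ((a : ZMod p), (a : ZMod m))}
        = Nat.card ({x : ZMod p // x ^ 2 = (a : ZMod p)} × {x : ZMod m // x ^ 2 = (a : ZMod m)}) := by
      refine Nat.card_congr ?_
      refine (Equiv.subtypeEquivRight fun y => ?_).trans (Equiv.subtypeProdEquivProd)
      constructor
      · intro h; constructor
        · have := congrArg Prod.fst h; simpa using this
        · have := congrArg Prod.snd h; simpa using this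
      · intro ⟨h1, h2⟩; ext
        · simpa using h1
        · simpa using h2
    rw [key2, Nat.card_prod, pow_succ]
    have h1 := natCard_sq_roots_prime p hp (a : ZMod p)
    have h2 := ih hs
    calc Nat.card {x : ZMod p // x ^ 2 = (a : ZMod p)} * Nat.card {x : ZMod m // x ^ 2 = (a : ZMod m)}
        ≤ 2 * 2 ^ s.card := Nat.mul_le_mul h1 h2
      _ = 2 ^ s.card * 2 := by ring

lemma interval_count (m : ℕ) (hm : 0 < m) (N : ℤ) (a : ℤ) :
    (((Finset.Ioo (-N) N)).filter (fun t => (m : ℤ) ∣ t ^ 2 - a)).card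
      ≤ Nat.card {x : ZMod m // x ^ 2 = (a : ZMod m)} * ((2 * N / m + 1).toNat) := by
  classical
  haveI : NeZero m := ⟨hm.ne'⟩
  have hcard : Nat.card {x : ZMod m // x ^ 2 = (a : ZMod m)}
      = (Finset.univ.filter (fun x : ZMod m => x ^ 2 = (a : ZMod m))).card := by
    rw [Nat.card_eq_fintype_card, Fintype.card_subtype]
  rw [hcard]
  have hm' : (0 : ℤ) < (m : ℤ) := by exact_mod_cast hm
  set R := Finset.univ.filter (fun x : ZMod m => x ^ 2 = (a : ZMod m)) with hR
  have := Finset.card_le_card_of_injOn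
    (f := fun t : ℤ => ((t : ZMod m), (t + N) / (m : ℤ)))
    (s := (Finset.Ioo (-N) N).filter (fun t => (m : ℤ) ∣ t ^ 2 - a))
    (t := R ×ˢ Finset.Icc (0 : ℤ) (2 * N / m))
    (by
      intro t ht
      simp only [Finset.mem_coe, Finset.mem_filter, Finset.mem_Ioo] at ht
      obtain ⟨⟨ht1, ht2⟩, hdvd⟩ := ht
      simp only [Finset.mem_coe, Finset.mem_product, Finset.mem_Icc, hR, Finset.mem_filter, Finset.mem_univ,
        true_and]
      refine ⟨?_, ?_, ?_⟩
      · have h0 : ((t ^ 2 - a : ℤ) : ZMod m) = 0 :=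
          (ZMod.intCast_zmod_eq_zero_iff_dvd _ m).mpr hdvd
        push_cast at h0
        linear_combination h0
      · exact Int.ediv_nonneg (by linarith) hm'.le
      · exact Int.ediv_le_ediv hm' (by linarith))
    (by
      intro t1 ht1 t2 ht2 heq
      simp only [Prod.mk.injEq] at heq
      obtain ⟨h1, h2⟩ := heq
      have hmod : t1 ≡ t2 [ZMOD (m : ℕ)] := (ZMod.intCast_eq_intCast_iff _ _ _).mp h1
      have hmod' : (t1 + N) % m = (t2 + N) % m := hmod.add_right N
      have e1 := Int.mul_ediv_add_emod (t1 + N) m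
      have e2 := Int.mul_ediv_add_emod (t2 + N) m
      rw [h2, hmod'] at e1
      linarith [e1, e2])
  calc _ ≤ (R ×ˢ Finset.Icc (0 : ℤ) (2 * N / m)).card := this
    _ = R.card * ((2 * N / m + 1).toNat) := by
        rw [Finset.card_product, Int.card_Icc]
        congr 1
        omega

lemma count_bound (L : ℝ) (hL : 3 ≤ L) (S : Finset ℕ) (hS : ∀ p ∈ S, p.Prime)
    (hSL : ∀ p ∈ S, L ≤ (p : ℝ)) (N : ℤ) (hN : 0 ≤ N) (a : ℤ) :
    ((((Finset.Ioo (-N) N)).filter (fun t => ∀ p ∈ S, (p : ℤ) ∣ t ^ 2 - a)).card : ℝ)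
      ≤ (2 : ℝ) ^ S.card * (2 * (N : ℝ) / L ^ S.card + 1) := by
  set m := ∏ p ∈ S, p with hm
  have hmpos : 0 < m := Finset.prod_pos fun p hp => (hS p hp).pos
  have hfe : ((Finset.Ioo (-N) N)).filter (fun t => ∀ p ∈ S, (p : ℤ) ∣ t ^ 2 - a)
      = ((Finset.Ioo (-N) N)).filter (fun t => (m : ℤ) ∣ t ^ 2 - a) := by
    ext t
    simp only [Finset.mem_filter, and_congr_right_iff]
    intro _
    constructor
    · intro h
      have hdvd : m ∣ (t ^ 2 - a).natAbs := by
        rw [hm]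
        refine Finset.prod_primes_dvd _ (fun p hp => Nat.Prime.prime (hS p hp)) ?_
        intro p hp
        have h6 : ((p : ℤ)).natAbs ∣ (t ^ 2 - a).natAbs := Int.natAbs_dvd_natAbs.mpr (h p hp)
        simpa using h6
      have h7 : ((m : ℤ)).natAbs ∣ (t ^ 2 - a).natAbs := by simpa using hdvd
      exact Int.natAbs_dvd_natAbs.mp h7
    · intro h p hp
      exact dvd_trans (Int.natCast_dvd_natCast.mpr (Finset.dvd_prod_of_mem _ hp)) h
  rw [hfe]
  have h1 := interval_count m hmpos N a
  have h2 := natCard_sq_roots_prod a S hS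
  rw [← hm] at h2
  have hq : (0 : ℤ) ≤ 2 * N / m := Int.ediv_nonneg (by linarith) (by positivity)
  have hcast : (((2 * N / (m : ℤ) + 1).toNat : ℝ)) = ((2 * N / (m : ℤ) : ℤ) : ℝ) + 1 := by
    have h' : ((2 * N / (m : ℤ) + 1).toNat : ℤ) = 2 * N / (m : ℤ) + 1 :=
      Int.toNat_of_nonneg (by linarith)
    exact_mod_cast congrArg (Int.cast : ℤ → ℝ) h'
  have hLpos : (0 : ℝ) < L := by linarith
  have hLk : L ^ S.card ≤ (m : ℝ) := by
    rw [hm]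
    push_cast
    calc L ^ S.card = ∏ _p ∈ S, L := by rw [Finset.prod_const]
      _ ≤ ∏ p ∈ S, (p : ℝ) := Finset.prod_le_prod (fun _ _ => hLpos.le) (fun p hp => hSL p hp)
  have hdivle : ((2 * N / (m : ℤ) : ℤ) : ℝ) ≤ 2 * (N : ℝ) / L ^ S.card := by
    have hr := Int.emod_nonneg (2 * N) (by positivity : ((m : ℤ)) ≠ 0)
    have he := Int.mul_ediv_add_emod (2 * N) (m : ℤ)
    have hmr : (0:ℝ) < (m : ℝ) := by exact_mod_cast hmpos
    have step1 : ((2 * N / (m : ℤ) : ℤ) : ℝ) ≤ 2 * (N : ℝ) / (m : ℝ) := by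
      rw [le_div_iff₀ hmr]
      have h5 : (2 * N / (m : ℤ)) * (m : ℤ) ≤ 2 * N := by rw [mul_comm]; linarith [he, hr]
      calc ((2 * N / (m : ℤ) : ℤ) : ℝ) * (m : ℝ)
          = (((2 * N / (m : ℤ)) * (m : ℤ) : ℤ) : ℝ) := by push_cast; ring
        _ ≤ ((2 * N : ℤ) : ℝ) := by exact_mod_cast h5
        _ = 2 * (N : ℝ) := by push_cast; ring
    refine step1.trans ?_
    exact div_le_div_of_nonneg_left (by positivity) (pow_pos hLpos _) hLk
  calc (((Finset.Ioo (-N) N).filter (fun t => (m : ℤ) ∣ t ^ 2 - a)).card : ℝ)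
      ≤ (Nat.card {x : ZMod m // x ^ 2 = (a : ZMod m)} : ℝ) * ((2 * N / (m : ℤ) + 1).toNat : ℝ) := by
        exact_mod_cast Nat.cast_le.mpr h1
    _ ≤ (2 : ℝ) ^ S.card * ((2 * N / (m : ℤ) + 1).toNat : ℝ) := by
        apply mul_le_mul_of_nonneg_right _ (by positivity)
        exact_mod_cast h2
    _ ≤ (2 : ℝ) ^ S.card * (2 * (N : ℝ) / L ^ S.card + 1) := by
        apply mul_le_mul_of_nonneg_left _ (by positivity)
        rw [hcast]
        linarith [hdivle]

lemma mem_primesIn {L : ℝ} (hL0 : 0 ≤ L) {p : ℕ} (hp : p ∈ primesIn L) :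
    p.Prime ∧ L ≤ (p : ℝ) ∧ (p : ℝ) ≤ 2 * L := by
  have hL' : p ∈ Finset.Icc ⌈L⌉₊ ⌊2 * L⌋₊ ∧ p.Prime := Finset.mem_filter.mp hp
  obtain ⟨hmem, hprime⟩ := hL'
  rw [Finset.mem_Icc] at hmem
  refine ⟨hprime, ?_, ?_⟩
  · exact le_trans (Nat.le_ceil L) (by exact_mod_cast hmem.1)
  · calc (p : ℝ) ≤ (⌊2 * L⌋₊ : ℝ) := by exact_mod_cast hmem.2
      _ ≤ 2 * L := Nat.floor_le (by positivity)

lemma one_lt_log_L {L : ℝ} (hL : 3 ≤ L) : 1 < Real.log L := by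
  have h3 : (1 : ℝ) < Real.log 3 := by
    rw [Real.lt_log_iff_exp_lt (by norm_num)]
    calc Real.exp 1 < 2.7182818286 := Real.exp_one_lt_d9
      _ < 3 := by norm_num
  calc (1:ℝ) < Real.log 3 := h3
    _ ≤ Real.log L := Real.log_le_log (by norm_num) hL

lemma primesIn_card_le (L : ℝ) (hL : 3 ≤ L) :
    ((primesIn L).card : ℝ) * Real.log L ≤ 2 * Real.log 4 * L := by
  have hLpos : (0:ℝ) < L := by linarith
  have hsum : ((primesIn L).card : ℝ) * Real.log L ≤ ∑ p ∈ primesIn L, Real.log (p : ℝ) := by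
    have h0 : ((primesIn L).card : ℝ) * Real.log L = ∑ _p ∈ primesIn L, Real.log L := by
      rw [Finset.sum_const, nsmul_eq_mul]
    rw [h0]
    exact Finset.sum_le_sum fun p hp => Real.log_le_log hLpos (mem_primesIn hLpos.le hp).2.1
  have hprod : ∑ p ∈ primesIn L, Real.log (p : ℝ) = Real.log ((∏ p ∈ primesIn L, p : ℕ) : ℝ) := by
    rw [Nat.cast_prod, Real.log_prod]
    intro p hp
    have := (mem_primesIn hLpos.le hp).1.pos
    positivity
  have hprodpos : 0 < ∏ p ∈ primesIn L, p :=
    Finset.prod_pos fun p hp => (mem_primesIn hLpos.le hp).1.pos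
  have hsubset : primesIn L ⊆ (Finset.range (⌊2 * L⌋₊ + 1)).filter Nat.Prime := by
    intro p hp
    have h1 := Finset.mem_filter.mp hp
    rw [Finset.mem_Icc] at h1
    exact Finset.mem_filter.mpr ⟨Finset.mem_range.mpr (Nat.lt_succ_of_le h1.1.2), h1.2⟩
  have hprim : ∏ p ∈ primesIn L, p ≤ primorial ⌊2 * L⌋₊ := by
    unfold primorial
    exact Finset.prod_le_prod_of_subset_of_one_le' hsubset
      (fun p hp _ => (Finset.mem_filter.mp hp).2.one_lt.le)
  have h4 : ∏ p ∈ primesIn L, p ≤ 4 ^ ⌊2 * L⌋₊ := hprim.trans (primorial_le_4_pow _)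
  have hlog4 : Real.log ((∏ p ∈ primesIn L, p : ℕ) : ℝ) ≤ (⌊2 * L⌋₊ : ℝ) * Real.log 4 := by
    calc Real.log ((∏ p ∈ primesIn L, p : ℕ) : ℝ) ≤ Real.log ((4 ^ ⌊2 * L⌋₊ : ℕ) : ℝ) :=
          Real.log_le_log (by exact_mod_cast hprodpos) (by exact_mod_cast h4)
      _ = (⌊2 * L⌋₊ : ℝ) * Real.log 4 := by
          push_cast
          rw [Real.log_pow]
  have hfloor : (⌊2 * L⌋₊ : ℝ) ≤ 2 * L := Nat.floor_le (by positivity)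
  have hlog4pos : 0 < Real.log 4 := Real.log_pos (by norm_num)
  calc ((primesIn L).card : ℝ) * Real.log L ≤ (⌊2 * L⌋₊ : ℝ) * Real.log 4 := by
        linarith [hsum, hprod ▸ hlog4]
    _ ≤ 2 * L * Real.log 4 := by nlinarith
    _ = 2 * Real.log 4 * L := by ring

theorem moment_omegaL (ν : ℕ) (hν : 1 ≤ ν) :
    ∃ C : ℝ, 0 < C ∧ ∀ (L T : ℝ) (a : ℤ), 3 ≤ L → 1 ≤ T →
      ∑ t ∈ Finset.Ioo (-⌈T⌉) ⌈T⌉, (omegaL L (t ^ 2 - a) : ℝ) ^ ν ≤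
        C * (T / Real.log L + L ^ ν / (Real.log L) ^ ν) := by
  set c : ℝ := 2 * Real.log 4 with hc
  have hlog4 : 1 < Real.log 4 := by
    rw [Real.lt_log_iff_exp_lt (by norm_num : (0:ℝ) < 4)]
    calc Real.exp 1 < 2.7182818286 := Real.exp_one_lt_d9
      _ < 4 := by norm_num
  have hc1 : 1 ≤ c := by nlinarith
  have hνR : (1:ℝ) ≤ (ν : ℝ) := by exact_mod_cast hν
  refine ⟨(ν + 1 : ℝ) * (ν:ℝ)^ν * 2^ν * c^ν * 4, by positivity, ?_⟩
  intro L T a hL hT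
  have hLpos : (0:ℝ) < L := by linarith
  have hlog1 : 1 < Real.log L := one_lt_log_L hL
  have hlogpos : 0 < Real.log L := by linarith
  set N : ℤ := ⌈T⌉ with hNdef
  have hN0 : 0 ≤ N := by
    have : (0:ℤ) < N := Int.ceil_pos.mpr (by linarith)
    linarith
  have hNR : (0:ℝ) ≤ (N : ℝ) := by exact_mod_cast hN0
  have hNT : (N : ℝ) ≤ 2 * T := by
    have := Int.ceil_lt_add_one T
    have h2 : ((⌈T⌉ : ℤ) : ℝ) < T + 1 := this
    linarith
  set P := primesIn L with hPdef
  -- Step A : expand the ν-th power as a sum over tuples of primes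
  have stepA : ∑ t ∈ Finset.Ioo (-N) N, ((omegaL L (t ^ 2 - a) : ℝ)) ^ ν
      = ∑ f ∈ Fintype.piFinset (fun _ : Fin ν => P),
          ((((Finset.Ioo (-N) N)).filter
            (fun t => ∀ i, ((f i : ℤ)) ∣ t ^ 2 - a)).card : ℝ) := by
    have key : ∀ t : ℤ, ((omegaL L (t ^ 2 - a) : ℝ)) ^ ν
        = ∑ f ∈ Fintype.piFinset (fun _ : Fin ν => P),
            (if (∀ i, ((f i : ℤ)) ∣ t ^ 2 - a) then (1:ℝ) else 0) := by
      intro t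
      rw [Finset.sum_boole]
      have hfilter : (Fintype.piFinset (fun _ : Fin ν => P)).filter
            (fun f => ∀ i, ((f i : ℤ)) ∣ t ^ 2 - a)
          = Fintype.piFinset (fun _ : Fin ν => P.filter (fun ℓ : ℕ => (ℓ : ℤ) ∣ t ^ 2 - a)) := by
        ext f
        simp only [Finset.mem_filter, Fintype.mem_piFinset, forall_and]
      rw [hfilter, Fintype.card_piFinset]
      rw [Finset.prod_const, Finset.card_univ, Fintype.card_fin]
      have : omegaL L (t ^ 2 - a) = (P.filter (fun ℓ : ℕ => (ℓ : ℤ) ∣ t ^ 2 - a)).card := rfl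
      rw [this]
      push_cast
      ring
    rw [Finset.sum_congr rfl (fun t _ => key t), Finset.sum_comm]
    exact Finset.sum_congr rfl fun f _ => Finset.sum_boole _ _
  set g : Finset ℕ → ℝ := fun S => (2:ℝ)^ν * (2 * (N:ℝ) / L ^ S.card + 1) with hg
  have hgnonneg : ∀ S : Finset ℕ, 0 ≤ g S := by
    intro S
    have h1 : 0 ≤ 2 * (N:ℝ) / L ^ S.card := div_nonneg (by linarith) (pow_pos hLpos _).le
    have h2 : (0:ℝ) ≤ 2^ν := by positivity
    rw [hg]
    dsimp only
    nlinarith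
  have stepB : ∑ f ∈ Fintype.piFinset (fun _ : Fin ν => P),
      ((((Finset.Ioo (-N) N)).filter (fun t => ∀ i, ((f i : ℤ)) ∣ t ^ 2 - a)).card : ℝ)
      ≤ ∑ f ∈ Fintype.piFinset (fun _ : Fin ν => P), g (Finset.image f Finset.univ) := by
    refine Finset.sum_le_sum fun f hf => ?_
    have hmem : ∀ i, f i ∈ P := Fintype.mem_piFinset.mp hf
    have hSsub : ∀ p ∈ Finset.image f Finset.univ, p ∈ P := by
      intro p hp; obtain ⟨i, _, rfl⟩ := Finset.mem_image.mp hp; exact hmem i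
    have hprime : ∀ p ∈ Finset.image f Finset.univ, p.Prime :=
      fun p hp => (mem_primesIn hLpos.le (hSsub p hp)).1
    have hge : ∀ p ∈ Finset.image f Finset.univ, L ≤ (p:ℝ) :=
      fun p hp => (mem_primesIn hLpos.le (hSsub p hp)).2.1
    have heq : (Finset.Ioo (-N) N).filter (fun t => ∀ i, ((f i : ℤ)) ∣ t ^ 2 - a)
        = (Finset.Ioo (-N) N).filter
            (fun t => ∀ p ∈ Finset.image f Finset.univ, (p : ℤ) ∣ t ^ 2 - a) := by
      ext t; simp only [Finset.mem_filter, and_congr_right_iff]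
      intro _
      constructor
      · intro h p hp; obtain ⟨i, _, rfl⟩ := Finset.mem_image.mp hp; exact h i
      · intro h i; exact h (f i) (Finset.mem_image.mpr ⟨i, Finset.mem_univ i, rfl⟩)
    rw [heq]
    refine (count_bound L hL _ hprime hge N hN0 a).trans ?_
    have hk : (Finset.image f Finset.univ).card ≤ ν := by
      calc (Finset.image f Finset.univ).card ≤ (Finset.univ : Finset (Fin ν)).card :=
            Finset.card_image_le
        _ = ν := by rw [Finset.card_univ, Fintype.card_fin]
    have h2 : (2:ℝ)^(Finset.image f Finset.univ).card ≤ 2^ν :=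
      pow_le_pow_right₀ (by norm_num) hk
    have h1 : 0 ≤ 2 * (N:ℝ) / L ^ (Finset.image f Finset.univ).card + 1 := by
      have := div_nonneg (by linarith : (0:ℝ) ≤ 2 * N)
        (pow_pos hLpos (Finset.image f Finset.univ).card).le
      linarith
    exact mul_le_mul_of_nonneg_right h2 h1
  -- Step C : group by image sets
  have hmapsto : ∀ f ∈ Fintype.piFinset (fun _ : Fin ν => P),
      Finset.image f Finset.univ ∈ P.powerset := by
    intro f hf
    rw [Finset.mem_powerset]
    intro p hp
    obtain ⟨i, _, rfl⟩ := Finset.mem_image.mp hp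
    exact Fintype.mem_piFinset.mp hf i
  have stepC : ∑ f ∈ Fintype.piFinset (fun _ : Fin ν => P), g (Finset.image f Finset.univ)
      = ∑ S ∈ P.powerset, ∑ f ∈ (Fintype.piFinset (fun _ : Fin ν => P)).filter
          (fun f => Finset.image f Finset.univ = S), g (Finset.image f Finset.univ) :=
    (Finset.sum_fiberwise_of_maps_to hmapsto _).symm
  have stepC2 : ∀ S ∈ P.powerset,
      ∑ f ∈ (Fintype.piFinset (fun _ : Fin ν => P)).filter
          (fun f => Finset.image f Finset.univ = S), g (Finset.image f Finset.univ)
      = (((Fintype.piFinset (fun _ : Fin ν => P)).filter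
          (fun f => Finset.image f Finset.univ = S)).card : ℝ) * g S := by
    intro S _
    rw [Finset.sum_congr rfl (fun f hf => by rw [(Finset.mem_filter.mp hf).2]),
      Finset.sum_const, nsmul_eq_mul]
  have fiber_le : ∀ S : Finset ℕ,
      ((Fintype.piFinset (fun _ : Fin ν => P)).filter
        (fun f => Finset.image f Finset.univ = S)).card ≤ S.card ^ ν := by
    intro S
    have hsub : (Fintype.piFinset (fun _ : Fin ν => P)).filter
        (fun f => Finset.image f Finset.univ = S) ⊆ Fintype.piFinset (fun _ : Fin ν => S) := by
      intro f hf
      obtain ⟨hf1, hf2⟩ := Finset.mem_filter.mp hf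
      rw [Fintype.mem_piFinset]
      intro i
      rw [← hf2]
      exact Finset.mem_image.mpr ⟨i, Finset.mem_univ i, rfl⟩
    calc _ ≤ (Fintype.piFinset (fun _ : Fin ν => S)).card := Finset.card_le_card hsub
      _ = S.card ^ ν := by
          rw [Fintype.card_piFinset, Finset.prod_const, Finset.card_univ, Fintype.card_fin]
  have fiber_empty : ∀ S : Finset ℕ, (S.card = 0 ∨ ν < S.card) →
      ((Fintype.piFinset (fun _ : Fin ν => P)).filter
        (fun f => Finset.image f Finset.univ = S)).card = 0 := by
    intro S hSc
    rw [Finset.card_eq_zero, Finset.filter_eq_empty_iff]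
    intro f hf hEq
    have himg : (Finset.image f Finset.univ).card ≤ ν := by
      calc (Finset.image f Finset.univ).card ≤ (Finset.univ : Finset (Fin ν)).card :=
            Finset.card_image_le
        _ = ν := by rw [Finset.card_univ, Fintype.card_fin]
    have hne : (Finset.image f Finset.univ).Nonempty :=
      ⟨f ⟨0, hν⟩, Finset.mem_image.mpr ⟨⟨0, hν⟩, Finset.mem_univ _, rfl⟩⟩
    have h1 : 1 ≤ S.card := by
      rw [← hEq]
      exact Finset.card_pos.mpr hne
    have h2 : S.card ≤ ν := hEq ▸ himg
    omega
  set Pc := P.card with hPcdef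
  -- Key analytic bounds
  have hPcle0 := primesIn_card_le L hL
  have hLoverlog : (1:ℝ) ≤ L / Real.log L := by
    rw [le_div_iff₀ hlogpos]
    have := Real.log_le_sub_one_of_pos hLpos
    linarith
  have hX0 : (0:ℝ) ≤ L ^ ν / (Real.log L) ^ ν :=
    div_nonneg (by positivity) (by positivity)
  set B : ℝ := (ν:ℝ)^ν * 2^ν * c^ν * (2*(N:ℝ)/Real.log L + L^ν/(Real.log L)^ν) with hB
  have hBnonneg : 0 ≤ B := by
    have h1 : 0 ≤ 2*(N:ℝ)/Real.log L := div_nonneg (by linarith) hlogpos.le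
    have h2 : (0:ℝ) ≤ (ν:ℝ)^ν * 2^ν * c^ν := by positivity
    nlinarith
  have termBound : ∀ i : ℕ, 1 ≤ i → i ≤ ν →
      (Pc:ℝ)^i * ((2:ℝ)^ν * (2*(N:ℝ)/L^i + 1))
        ≤ 2^ν * c^ν * (2*(N:ℝ)/Real.log L + L^ν/(Real.log L)^ν) := by
    intro i h1 h2
    have hA : (Pc:ℝ)^i * (2*(N:ℝ)/L^i) ≤ 2*(N:ℝ) * (c^ν / Real.log L) := by
      have e1 : (Pc:ℝ)^i * (2*(N:ℝ)/L^i) = 2*(N:ℝ) * (((Pc:ℝ)/L)^i) := by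
        rw [div_pow]; ring
      have e2 : ((Pc:ℝ)/L) ≤ c / Real.log L := by
        rw [div_le_div_iff₀ hLpos hlogpos]
        calc (Pc:ℝ) * Real.log L ≤ 2 * Real.log 4 * L := hPcle0
          _ = c * L := by rw [hc]
      have e3 : ((Pc:ℝ)/L)^i ≤ (c/Real.log L)^i := pow_le_pow_left₀ (by positivity) e2 i
      have e4 : (c/Real.log L)^i ≤ c^ν / Real.log L := by
        rw [div_pow]
        refine div_le_div₀ (by positivity) (pow_le_pow_right₀ hc1 h2) hlogpos ?_
        calc Real.log L = (Real.log L)^1 := (pow_one _).symm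
          _ ≤ (Real.log L)^i := pow_le_pow_right₀ hlog1.le h1
      rw [e1]
      have := e3.trans e4
      nlinarith
    have hB2 : (Pc:ℝ)^i ≤ c^ν * (L^ν/(Real.log L)^ν) := by
      have e5 : (Pc:ℝ) ≤ c * (L / Real.log L) := by
        rw [mul_div_assoc'] at *
        rw [le_div_iff₀ hlogpos]
        calc (Pc:ℝ) * Real.log L ≤ 2 * Real.log 4 * L := hPcle0
          _ = c * L := by rw [hc]
      have e6 : (Pc:ℝ)^i ≤ (c * (L/Real.log L))^i := pow_le_pow_left₀ (by positivity) e5 i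
      have e8 : (c * (L/Real.log L))^i ≤ c^ν * (L/Real.log L)^ν := by
        rw [mul_pow]
        refine mul_le_mul (pow_le_pow_right₀ hc1 h2) (pow_le_pow_right₀ hLoverlog h2)
          (by positivity) (by positivity)
      have e9 : (L/Real.log L)^ν = L^ν/(Real.log L)^ν := div_pow _ _ _
      calc (Pc:ℝ)^i ≤ (c * (L/Real.log L))^i := e6
        _ ≤ c^ν * (L/Real.log L)^ν := e8
        _ = c^ν * (L^ν/(Real.log L)^ν) := by rw [e9]
    calc (Pc:ℝ)^i * ((2:ℝ)^ν * (2*(N:ℝ)/L^i + 1))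
        = (2:ℝ)^ν * ((Pc:ℝ)^i * (2*(N:ℝ)/L^i) + (Pc:ℝ)^i) := by ring
      _ ≤ (2:ℝ)^ν * (2*(N:ℝ) * (c^ν / Real.log L) + c^ν * (L^ν/(Real.log L)^ν)) := by
          refine mul_le_mul_of_nonneg_left ?_ (by positivity)
          linarith
      _ = 2^ν * c^ν * (2*(N:ℝ)/Real.log L + L^ν/(Real.log L)^ν) := by ring
  -- bound inner sums over powersetCard i P
  have inner_bound : ∀ i ∈ Finset.range (Pc + 1),
      (∑ S ∈ Finset.powersetCard i P,
        (((Fintype.piFinset (fun _ : Fin ν => P)).filter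
          (fun f => Finset.image f Finset.univ = S)).card : ℝ) * g S)
        ≤ (if 1 ≤ i ∧ i ≤ ν then B else 0) := by
    intro i _
    by_cases hi : 1 ≤ i ∧ i ≤ ν
    · rw [if_pos hi]
      have per : ∀ S ∈ Finset.powersetCard i P,
          (((Fintype.piFinset (fun _ : Fin ν => P)).filter
            (fun f => Finset.image f Finset.univ = S)).card : ℝ) * g S
          ≤ (ν:ℝ)^ν * ((2:ℝ)^ν * (2*(N:ℝ)/L^i + 1)) := by
        intro S hS
        obtain ⟨hSP, hScard⟩ := Finset.mem_powersetCard.mp hS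
        have hf1 : (((Fintype.piFinset (fun _ : Fin ν => P)).filter
            (fun f => Finset.image f Finset.univ = S)).card : ℝ) ≤ (ν:ℝ)^ν := by
          have h1 := fiber_le S
          have h2 : (S.card : ℝ)^ν ≤ (ν:ℝ)^ν := by
            refine pow_le_pow_left₀ (by positivity) ?_ ν
            rw [hScard]; exact_mod_cast hi.2
          calc (((Fintype.piFinset (fun _ : Fin ν => P)).filter
              (fun f => Finset.image f Finset.univ = S)).card : ℝ) ≤ ((S.card ^ ν : ℕ) : ℝ) := by
                exact_mod_cast h1
            _ = (S.card : ℝ)^ν := by push_cast; ring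
            _ ≤ (ν:ℝ)^ν := h2
        have hgS : g S = (2:ℝ)^ν * (2*(N:ℝ)/L^i + 1) := by rw [hg]; dsimp only; rw [hScard]
        rw [hgS]
        refine mul_le_mul_of_nonneg_right hf1 (mul_nonneg (by positivity) ?_)
        have := div_nonneg (by linarith : (0:ℝ) ≤ 2*(N:ℝ)) (pow_pos hLpos i).le
        linarith
      calc ∑ S ∈ Finset.powersetCard i P,
            (((Fintype.piFinset (fun _ : Fin ν => P)).filter
              (fun f => Finset.image f Finset.univ = S)).card : ℝ) * g S
          ≤ ∑ _S ∈ Finset.powersetCard i P, (ν:ℝ)^ν * ((2:ℝ)^ν * (2*(N:ℝ)/L^i + 1)) :=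
            Finset.sum_le_sum per
        _ = ((Finset.powersetCard i P).card : ℝ) * ((ν:ℝ)^ν * ((2:ℝ)^ν * (2*(N:ℝ)/L^i + 1))) := by
            rw [Finset.sum_const, nsmul_eq_mul]
        _ ≤ (Pc:ℝ)^i * ((ν:ℝ)^ν * ((2:ℝ)^ν * (2*(N:ℝ)/L^i + 1))) := by
            refine mul_le_mul_of_nonneg_right ?_ ?_
            · rw [Finset.card_powersetCard]
              calc ((Pc.choose i : ℕ) : ℝ) ≤ ((Pc ^ i : ℕ) : ℝ) := by
                    exact_mod_cast Nat.choose_le_pow Pc i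
                _ = (Pc:ℝ)^i := by push_cast; ring
            · have h1:= div_nonneg (by linarith : (0:ℝ) ≤ 2*(N:ℝ)) (pow_pos hLpos i).le
              positivity
        _ = (ν:ℝ)^ν * ((Pc:ℝ)^i * ((2:ℝ)^ν * (2*(N:ℝ)/L^i + 1))) := by ring
        _ ≤ (ν:ℝ)^ν * (2^ν * c^ν * (2*(N:ℝ)/Real.log L + L^ν/(Real.log L)^ν)) := by
            refine mul_le_mul_of_nonneg_left (termBound i hi.1 hi.2) (by positivity)
        _ = B := by rw [hB]; ring
    · rw [if_neg hi]
      have hz : ∀ S ∈ Finset.powersetCard i P,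
          (((Fintype.piFinset (fun _ : Fin ν => P)).filter
            (fun f => Finset.image f Finset.univ = S)).card : ℝ) * g S = 0 := by
        intro S hS
        obtain ⟨hSP, hScard⟩ := Finset.mem_powersetCard.mp hS
        have : ((Fintype.piFinset (fun _ : Fin ν => P)).filter
            (fun f => Finset.image f Finset.univ = S)).card = 0 := by
          refine fiber_empty S ?_
          omega
        rw [this]
        simp
      rw [Finset.sum_congr rfl hz, Finset.sum_const, smul_zero]
  -- Put everything together
  have main_le : ∑ t ∈ Finset.Ioo (-N) N, ((omegaL L (t ^ 2 - a) : ℝ)) ^ ν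
      ≤ (ν:ℝ) * B := by
    calc ∑ t ∈ Finset.Ioo (-N) N, ((omegaL L (t ^ 2 - a) : ℝ)) ^ ν
        = ∑ f ∈ Fintype.piFinset (fun _ : Fin ν => P),
            ((((Finset.Ioo (-N) N)).filter
              (fun t => ∀ i, ((f i : ℤ)) ∣ t ^ 2 - a)).card : ℝ) := stepA
      _ ≤ ∑ f ∈ Fintype.piFinset (fun _ : Fin ν => P), g (Finset.image f Finset.univ) := stepB
      _ = ∑ S ∈ P.powerset, ∑ f ∈ (Fintype.piFinset (fun _ : Fin ν => P)).filter
            (fun f => Finset.image f Finset.univ = S), g (Finset.image f Finset.univ) := stepC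
      _ = ∑ S ∈ P.powerset, (((Fintype.piFinset (fun _ : Fin ν => P)).filter
            (fun f => Finset.image f Finset.univ = S)).card : ℝ) * g S :=
          Finset.sum_congr rfl stepC2
      _ = ∑ i ∈ Finset.range (Pc + 1), ∑ S ∈ Finset.powersetCard i P,
            (((Fintype.piFinset (fun _ : Fin ν => P)).filter
              (fun f => Finset.image f Finset.univ = S)).card : ℝ) * g S := by
          rw [Finset.powerset_card_disjiUnion]; exact Finset.sum_disjiUnion _ _ _
      _ ≤ ∑ i ∈ Finset.range (Pc + 1), (if 1 ≤ i ∧ i ≤ ν then B else 0) :=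
          Finset.sum_le_sum inner_bound
      _ = ∑ i ∈ (Finset.range (Pc + 1)).filter (fun i => 1 ≤ i ∧ i ≤ ν), B :=
          (Finset.sum_filter _ _).symm
      _ = (((Finset.range (Pc + 1)).filter (fun i => 1 ≤ i ∧ i ≤ ν)).card : ℝ) * B := by
          rw [Finset.sum_const, nsmul_eq_mul]
      _ ≤ (ν:ℝ) * B := by
          refine mul_le_mul_of_nonneg_right ?_ hBnonneg
          have hsub : (Finset.range (Pc + 1)).filter (fun i => 1 ≤ i ∧ i ≤ ν)
              ⊆ Finset.Icc 1 ν := by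
            intro i hi
            have := (Finset.mem_filter.mp hi).2
            exact Finset.mem_Icc.mpr this
          have := Finset.card_le_card hsub
          calc ((((Finset.range (Pc + 1)).filter (fun i => 1 ≤ i ∧ i ≤ ν)).card : ℕ) : ℝ)
              ≤ ((Finset.Icc 1 ν).card : ℝ) := by exact_mod_cast this
            _ = (ν:ℝ) := by rw [Nat.card_Icc]; push_cast; ring
  refine main_le.trans ?_
  rw [hB]
  have hfrac : 2*(N:ℝ)/Real.log L ≤ 4*T/Real.log L :=
    div_le_div_of_nonneg_right (by linarith) hlogpos.le
  have hTlog : 0 ≤ T / Real.log L := div_nonneg (by linarith) hlogpos.le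
  have hK : (0:ℝ) ≤ (ν:ℝ)^ν * 2^ν * c^ν := by positivity
  have hstep : (ν:ℝ) * ((ν:ℝ)^ν * 2^ν * c^ν * (2*(N:ℝ)/Real.log L + L^ν/(Real.log L)^ν))
      ≤ (ν:ℝ) * ((ν:ℝ)^ν * 2^ν * c^ν * (4 * (T/Real.log L + L^ν/(Real.log L)^ν))) := by
    refine mul_le_mul_of_nonneg_left ?_ (by positivity)
    refine mul_le_mul_of_nonneg_left ?_ hK
    have h4T : 4*T/Real.log L = 4*(T/Real.log L) := by ring
    rw [h4T] at hfrac
    linarith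
  refine hstep.trans ?_
  have hfinal : (ν:ℝ) * ((ν:ℝ)^ν * 2^ν * c^ν * (4 * (T/Real.log L + L^ν/(Real.log L)^ν)))
      = (ν:ℝ) * (ν:ℝ)^ν * 2^ν * c^ν * 4 * (T/Real.log L + L^ν/(Real.log L)^ν) := by ring
  rw [hfinal]
  refine mul_le_mul_of_nonneg_right ?_ (by positivity)
  have : (ν:ℝ) ≤ (ν:ℝ) + 1 := by linarith
  nlinarith [hK, hνR, pow_nonneg (by norm_num : (0:ℝ) ≤ 2) ν, pow_nonneg (by linarith : (0:ℝ) ≤ c) ν]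
end

section
/- Fix ν ≥ 1. For each j = 0,…,ν, let Q_j be the set of 2ν-tuples (ℓ₁,…,ℓ_{2ν}) of primes in [L, 2L] such that the product ℓ₁⋯ℓ_{2ν} has the form k²m with m squarefree and k a product of exactly j primes. Then #Q_j ≪ (π(2L) - π(L))^{2ν - j}, where the implied constant depends only on ν. -/
open Finset

/-- Counting lemma: a set of tuples with values in `P` and at most `r` distinct values
has at most `M^M * |P|^r` elements. -/
lemma tuple_count_aux {M r : ℕ} (P : Finset ℕ) (hP : P.Nonempty) (Q : Set (Fin M → ℕ))
    (hmem : ∀ ℓ ∈ Q, ∀ i, ℓ i ∈ P)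
    (hcard : ∀ ℓ ∈ Q, (Finset.image ℓ Finset.univ).card ≤ r) :
    Q.ncard ≤ M ^ M * P.card ^ r := by
  classical
  obtain ⟨p₀, hp₀⟩ := hP
  have hQfin : Q.Finite := by
    refine Set.Finite.subset (Finset.finite_toSet (Fintype.piFinset fun _ : Fin M => P)) ?_
    intro ℓ hℓ
    simp only [Finset.mem_coe, Fintype.mem_piFinset]
    exact hmem ℓ hℓ
  have hTM : ∀ ℓ : Fin M → ℕ, (Finset.image ℓ Finset.univ).card ≤ M := fun ℓ =>
    le_trans Finset.card_image_le (by simp)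
  set Φ : (Fin M → ℕ) → (Fin M → Fin M) × (Fin r → ℕ) := fun ℓ =>
    (fun i => ⟨(((Finset.image ℓ Finset.univ).orderIsoOfFin rfl).symm
        ⟨ℓ i, Finset.mem_image_of_mem ℓ (Finset.mem_univ i)⟩ : Fin _), by
          exact lt_of_lt_of_le (Fin.isLt _) (hTM ℓ)⟩,
     fun a => if ha : (a : ℕ) < (Finset.image ℓ Finset.univ).card then
        (((Finset.image ℓ Finset.univ).orderIsoOfFin rfl) ⟨a, ha⟩ : ℕ) else p₀) with hΦ
  -- key recovery equation
  have hkey : ∀ ℓ ∈ Q, ∀ i : Fin M, ∃ hpf : ((Φ ℓ).1 i : ℕ) < r,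
      (Φ ℓ).2 ⟨((Φ ℓ).1 i : ℕ), hpf⟩ = ℓ i := by
    intro ℓ hℓ i
    simp only [hΦ]
    refine ⟨lt_of_lt_of_le (Fin.isLt _) (hcard ℓ hℓ), ?_⟩
    rw [dif_pos (Fin.isLt _)]
    simp
  have hinj : Set.InjOn Φ Q := by
    intro ℓ hℓ ℓ' hℓ' heq
    funext i
    obtain ⟨pf1, h1⟩ := hkey ℓ hℓ i
    obtain ⟨pf2, h2⟩ := hkey ℓ' hℓ' i
    rw [← h1, ← h2]
    have hfst : (Φ ℓ).1 i = (Φ ℓ').1 i := by rw [heq]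
    have hsnd : (Φ ℓ).2 = (Φ ℓ').2 := by rw [heq]
    have hfin : (⟨((Φ ℓ).1 i : ℕ), pf1⟩ : Fin r) = ⟨((Φ ℓ').1 i : ℕ), pf2⟩ := by
      simp only [Fin.mk.injEq]
      exact congrArg Fin.val hfst
    rw [hsnd, hfin]
  have hcount : Q.ncard = hQfin.toFinset.card := Set.ncard_eq_toFinset_card Q hQfin
  rw [hcount]
  have hle : hQfin.toFinset.card ≤
      ((Finset.univ : Finset (Fin M → Fin M)) ×ˢ
        Fintype.piFinset fun _ : Fin r => P).card := by
    apply Finset.card_le_card_of_injOn Φ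
    · intro ℓ hℓ
      simp only [Finset.mem_coe, Set.Finite.mem_toFinset] at hℓ ⊢
      rw [Finset.mem_product]
      constructor
      · exact Finset.mem_univ _
      · rw [Fintype.mem_piFinset]
        intro a
        simp only [hΦ]
        split
        · next ha =>
          have hsub : Finset.image ℓ Finset.univ ⊆ P := by
            rw [Finset.image_subset_iff]
            intro i _
            exact hmem ℓ hℓ i
          exact hsub (((Finset.image ℓ Finset.univ).orderIsoOfFin rfl) ⟨a, ha⟩).2
        · exact hp₀
    · intro x hx y hy hxy
      exact hinj (hQfin.mem_toFinset.mp hx) (hQfin.mem_toFinset.mp hy) hxy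
  refine le_trans hle (le_of_eq ?_)
  rw [Finset.card_product, Fintype.card_piFinset]
  simp [Fintype.card_fun]

/-- Arithmetic lemma: if the product of primes `ℓ i` equals `k² m` with `m` squarefree
and `Ω(k) = j`, then the number of distinct values plus `j` is at most `M`. -/
lemma image_card_aux {M j : ℕ} (ℓ : Fin M → ℕ) (hp : ∀ i, (ℓ i).Prime)
    (k m : ℕ) (hN : ∏ i, ℓ i = k ^ 2 * m) (hm : Squarefree m)
    (hj : k.primeFactorsList.length = j) :
    (Finset.image ℓ Finset.univ).card + j ≤ M := by
  classical
  have hℓ0 : ∀ i, ℓ i ≠ 0 := fun i => (hp i).pos.ne'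
  have hN0 : (∏ i, ℓ i) ≠ 0 := Finset.prod_ne_zero_iff.mpr fun i _ => hℓ0 i
  have hk0 : k ≠ 0 := by
    rintro rfl
    rw [hN] at hN0
    simp at hN0
  have hm0 : m ≠ 0 := by
    rintro rfl
    rw [hN] at hN0
    simp at hN0
  have hfacN : ∀ p, (∏ i, ℓ i).factorization p =
      (Finset.univ.filter fun i => ℓ i = p).card := by
    intro p
    rw [Nat.factorization_prod (fun i _ => hℓ0 i), Finsupp.finset_sum_apply,
      Finset.card_filter]
    refine Finset.sum_congr rfl fun i _ => ?_
    rw [(hp i).factorization, Finsupp.single_apply]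
  set V := Finset.image ℓ Finset.univ with hV
  have hsubV : k.primeFactors ⊆ V := by
    intro q hq
    have hq' : q.Prime := Nat.prime_of_mem_primeFactors hq
    have hdvd : q ∣ ∏ i, ℓ i := by
      refine dvd_trans (Nat.dvd_of_mem_primeFactors hq) ?_
      rw [hN]
      exact dvd_mul_of_dvd_left (dvd_pow_self k two_ne_zero) m
    obtain ⟨i, _, hdi⟩ := hq'.prime.exists_mem_finset_dvd hdvd
    have : q = ℓ i := (Nat.prime_dvd_prime_iff_eq hq' (hp i)).mp hdi
    exact Finset.mem_image.mpr ⟨i, Finset.mem_univ i, this.symm⟩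
  have hjsum : j = ∑ p ∈ V, k.factorization p := by
    rw [← hj, ← List.sum_toFinset_count_eq_length, Nat.toFinset_factors]
    rw [Finset.sum_subset hsubV]
    · exact Finset.sum_congr rfl fun p _ => Nat.primeFactorsList_count_eq
    · intro p _ hpk
      rw [← Nat.toFinset_factors, List.mem_toFinset] at hpk
      exact List.count_eq_zero_of_not_mem hpk
  have hper : ∀ p ∈ V, k.factorization p + 1 ≤ (∏ i, ℓ i).factorization p := by
    intro p hpV
    obtain ⟨i, _, rfl⟩ := Finset.mem_image.mp hpV
    have h1 : 1 ≤ (∏ i, ℓ i).factorization (ℓ i) :=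
      (hp i).factorization_pos_of_dvd hN0 (Finset.dvd_prod_of_mem ℓ (Finset.mem_univ i))
    have h2 : (∏ i, ℓ i).factorization (ℓ i) =
        2 * k.factorization (ℓ i) + m.factorization (ℓ i) := by
      rw [hN, Nat.factorization_mul (pow_ne_zero 2 hk0) hm0, Nat.factorization_pow]
      simp [mul_comm]
    have h3 : m.factorization (ℓ i) ≤ 1 := hm.natFactorization_le_one _
    omega
  have hsum : ∑ p ∈ V, (k.factorization p + 1) ≤ ∑ p ∈ V, (∏ i, ℓ i).factorization p :=
    Finset.sum_le_sum hper
  have htot : ∑ p ∈ V, (∏ i, ℓ i).factorization p = M := by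
    calc ∑ p ∈ V, (∏ i, ℓ i).factorization p
        = ∑ p ∈ V, (Finset.univ.filter fun i => ℓ i = p).card := by
          exact Finset.sum_congr rfl fun p _ => hfacN p
      _ = (Finset.univ : Finset (Fin M)).card :=
          (Finset.card_eq_sum_card_image ℓ Finset.univ).symm
      _ = M := by simp
  rw [Finset.sum_add_distrib, Finset.sum_const, smul_eq_mul, mul_one] at hsum
  omega

/-- Difference of prime counting functions counts primes in an interval. -/
lemma primeCounting_sub (a b : ℕ) (hab : a ≤ b) :
    b.primeCounting - a.primeCounting = ((Finset.Ioc a b).filter Nat.Prime).card := by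
  have hpc : ∀ n : ℕ, n.primeCounting = ((Finset.range (n + 1)).filter Nat.Prime).card := by
    intro n
    rw [Nat.primeCounting, Nat.primeCounting', Nat.count_eq_card_filter_range]
  rw [hpc, hpc]
  have hsplit : (Finset.range (b + 1)).filter Nat.Prime =
      (Finset.range (a + 1)).filter Nat.Prime ∪ (Finset.Ioc a b).filter Nat.Prime := by
    rw [← Finset.filter_union]
    congr 1
    ext x
    simp only [Finset.mem_range, Finset.mem_union, Finset.mem_Ioc]
    omega
  have hdisj : Disjoint ((Finset.range (a + 1)).filter Nat.Prime)
      ((Finset.Ioc a b).filter Nat.Prime) := by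
    rw [Finset.disjoint_left]
    intro x hx hx'
    simp only [Finset.mem_filter, Finset.mem_range, Finset.mem_Ioc] at hx hx'
    omega
  rw [hsplit, Finset.card_union_of_disjoint hdisj]
  omega

theorem card_tuples_with_square_part (ν : ℕ) (hν : 1 ≤ ν) :
    ∃ C : ℝ, 0 < C ∧ ∀ (L : ℝ), 3 ≤ L → ∀ j : ℕ, j ≤ ν →
      (({ℓ : Fin (2 * ν) → ℕ |
          (∀ i, (ℓ i).Prime ∧ L ≤ ℓ i ∧ (ℓ i : ℝ) ≤ 2 * L) ∧
          ∃ k m : ℕ, (∏ i, ℓ i) = k ^ 2 * m ∧ Squarefree m ∧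
            k.primeFactorsList.length = j}).ncard : ℝ) ≤
        C * ((⌊2 * L⌋₊.primeCounting - ⌊L⌋₊.primeCounting : ℕ) : ℝ) ^ (2 * ν - j) := by
  classical
  refine ⟨(((2 * ν) ^ (2 * ν) * 2 ^ (2 * ν) : ℕ) : ℝ), ?_, ?_⟩
  · exact_mod_cast Nat.mul_pos (Nat.pow_pos (by omega)) (Nat.pow_pos (by omega))
  intro L hL j hj
  set Q : Set (Fin (2 * ν) → ℕ) := {ℓ : Fin (2 * ν) → ℕ |
      (∀ i, (ℓ i).Prime ∧ L ≤ ℓ i ∧ (ℓ i : ℝ) ≤ 2 * L) ∧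
      ∃ k m : ℕ, (∏ i, ℓ i) = k ^ 2 * m ∧ Squarefree m ∧
        k.primeFactorsList.length = j} with hQdef
  set a := ⌊L⌋₊ with ha
  set b := ⌊2 * L⌋₊ with hb
  have hL0 : (0 : ℝ) ≤ L := by linarith
  have hab : a ≤ b := Nat.floor_le_floor (by linarith)
  have hcount : b.primeCounting - a.primeCounting = ((Finset.Ioc a b).filter Nat.Prime).card :=
    primeCounting_sub a b hab
  set nP := ((Finset.Ioc a b).filter Nat.Prime).card with hnPdef
  rw [hcount]
  rcases Q.eq_empty_or_nonempty with hQe | ⟨ℓ₀, hℓ₀⟩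
  · rw [hQe]
    simp only [Set.ncard_empty, Nat.cast_zero]
    positivity
  · set P : Finset ℕ := (Finset.Icc ⌈L⌉₊ b).filter Nat.Prime with hPdef
    have hmemP : ∀ ℓ ∈ Q, ∀ i, ℓ i ∈ P := by
      intro ℓ hℓ i
      obtain ⟨h1, h2, h3⟩ := hℓ.1 i
      rw [hPdef, Finset.mem_filter, Finset.mem_Icc]
      exact ⟨⟨Nat.ceil_le.mpr h2, Nat.le_floor h3⟩, h1⟩
    have hi0 : (0 : ℕ) < 2 * ν := by omega
    have hPne : P.Nonempty := ⟨ℓ₀ ⟨0, hi0⟩, hmemP ℓ₀ hℓ₀ _⟩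
    have hcardim : ∀ ℓ ∈ Q, (Finset.image ℓ Finset.univ).card ≤ 2 * ν - j := by
      intro ℓ hℓ
      obtain ⟨hpr, k, m, hNe, hm, hlen⟩ := hℓ
      have := image_card_aux ℓ (fun i => (hpr i).1) k m hNe hm hlen
      omega
    have hmain : Q.ncard ≤ (2 * ν) ^ (2 * ν) * P.card ^ (2 * ν - j) :=
      tuple_count_aux P hPne Q hmemP hcardim
    have hPsub : P ⊆ insert a ((Finset.Ioc a b).filter Nat.Prime) := by
      intro p hp
      rw [hPdef, Finset.mem_filter, Finset.mem_Icc] at hp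
      rcases eq_or_ne p a with rfl | hne
      · exact Finset.mem_insert_self _ _
      · refine Finset.mem_insert_of_mem ?_
        rw [Finset.mem_filter, Finset.mem_Ioc]
        have hfc : a ≤ ⌈L⌉₊ := Nat.floor_le_ceil L
        exact ⟨⟨by omega, hp.1.2⟩, hp.2⟩
    have hPcard : P.card ≤ nP + 1 :=
      le_trans (Finset.card_le_card hPsub) (Finset.card_insert_le _ _)
    have hnP1 : 1 ≤ nP := by
      set p := ℓ₀ ⟨0, hi0⟩ with hpdef
      have hpP := hmemP ℓ₀ hℓ₀ ⟨0, hi0⟩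
      rw [hPdef, Finset.mem_filter, Finset.mem_Icc] at hpP
      by_cases hpa : a < p
      · have : p ∈ (Finset.Ioc a b).filter Nat.Prime := by
          rw [Finset.mem_filter, Finset.mem_Ioc]
          exact ⟨⟨hpa, hpP.1.2⟩, hpP.2⟩
        exact Finset.card_pos.mpr ⟨p, this⟩
      · push_neg at hpa
        have hfc : a ≤ ⌈L⌉₊ := Nat.floor_le_ceil L
        have hpa' : p = a := le_antisymm hpa (le_trans hfc hpP.1.1)
        have ha3 : 3 ≤ a := by
          rw [ha]
          exact Nat.le_floor (by exact_mod_cast hL)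
        obtain ⟨q, hq, hq1, hq2⟩ := Nat.exists_prime_lt_and_le_two_mul a (by omega)
        have hqb : q ≤ b := by
          refine le_trans hq2 (Nat.le_floor ?_)
          push_cast
          have := Nat.floor_le hL0
          rw [← ha] at this
          linarith
        have : q ∈ (Finset.Ioc a b).filter Nat.Prime := by
          rw [Finset.mem_filter, Finset.mem_Ioc]
          exact ⟨⟨hq1, hqb⟩, hq⟩
        exact Finset.card_pos.mpr ⟨q, this⟩
    have hfinal : Q.ncard ≤ (2 * ν) ^ (2 * ν) * 2 ^ (2 * ν) * nP ^ (2 * ν - j) := by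
      calc Q.ncard ≤ (2 * ν) ^ (2 * ν) * P.card ^ (2 * ν - j) := hmain
        _ ≤ (2 * ν) ^ (2 * ν) * (2 * nP) ^ (2 * ν - j) := by
            refine Nat.mul_le_mul_left _ (Nat.pow_le_pow_left ?_ _)
            omega
        _ = (2 * ν) ^ (2 * ν) * (2 ^ (2 * ν - j) * nP ^ (2 * ν - j)) := by rw [mul_pow 2 nP]
        _ ≤ (2 * ν) ^ (2 * ν) * (2 ^ (2 * ν) * nP ^ (2 * ν - j)) := by
            refine Nat.mul_le_mul_left _ (Nat.mul_le_mul_right _ ?_)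
            exact Nat.pow_le_pow_right (by omega) (by omega)
        _ = (2 * ν) ^ (2 * ν) * 2 ^ (2 * ν) * nP ^ (2 * ν - j) := by ring
    exact_mod_cast hfinal
end
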